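/- Consider problem P4 with all parameters positive (in particular every weight w_{o_i}, w_{p_i}, w_{q_k} is positive) and suppose that for every device n the feasible point (α₁, α₂, l) satisfies the standing assumption k_n·f_n³·T > E_n^h(α₁), where E_n^h(α₁) = min(η·P·h_n·α₁·T, E_n^max). If (α₁, α₂, l) is feasible for P4 and at least one device's energy-causality constraint holds with strict inequality, then there exists another feasible point of P4 with the same (α₁, α₂) and strictly larger objective value W; consequently, at any maximizer of P4 every device's energy-causality constraint holds with equality (all devices exhaust the energy collected during the time frame). -/

import Mathlib

/-- A point of problem P4: `(α₁, α₂, l_o^loc, l_o^ap, l_o^p, l_p^loc, l_q^loc, l_q^ap)`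
with `m` collaborative clusters and `K = N − 2m` independent devices. -/
abbrev P4Point (m K : ℕ) :=
  ℝ × ℝ × (Fin m → ℝ) × (Fin m → ℝ) × (Fin m → ℝ) × (Fin m → ℝ) × (Fin K → ℝ) × (Fin K → ℝ)

private lemma sum_update_diff' {n : ℕ} (f g : Fin n → ℝ) (i : Fin n)
    (h : ∀ j, j ≠ i → f j = g j) :
    ∑ j, f j = ∑ j, g j + (f i - g i) := by
  have h1 : ∑ j, (f j - g j) = f i - g i := by
    rw [Fintype.sum_eq_single i]
    intro j hj; rw [h j hj]; ring
  have h2 : ∑ j, f j = ∑ j, g j + ∑ j, (f j - g j) := by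
    rw [← Finset.sum_add_distrib]
    exact Finset.sum_congr rfl (fun j _ => by ring)
  rw [h2, h1]

/-- Lemma 1 of the paper, for problem P4 with all parameters positive and harvested
energy `E_n^h(α₁) = min(η·P·h_n·α₁·T, E_n^max)`: under the standing assumption
`k_n·f_n³·T > E_n^h(α₁)` for every device, if a feasible point has at least one
slack energy-causality constraint, then there is a feasible point with the same
`(α₁, α₂)` and strictly larger objective; consequently, at any maximizer of P4
every device's energy-causality constraint holds with equality. -/
theorem P4_maximizer_exhausts_energy
    (m K : ℕ)
    (w_o φ_o f_o k_o h_o p_o R_o Emax_o : Fin m → ℝ)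
    (w_p φ_p f_p k_p h_p R_ap Emax_p : Fin m → ℝ)
    (w_q φ_q f_q k_q h_q p_q R_q Emax_q : Fin K → ℝ)
    (P f_ap η T l_th : ℝ)
    (hw_o : ∀ i, 0 < w_o i) (hφ_o : ∀ i, 0 < φ_o i) (hf_o : ∀ i, 0 < f_o i)
    (hk_o : ∀ i, 0 < k_o i) (hh_o : ∀ i, 0 < h_o i) (hp_o : ∀ i, 0 < p_o i)
    (hR_o : ∀ i, 0 < R_o i) (hEmax_o : ∀ i, 0 < Emax_o i)
    (hw_p : ∀ i, 0 < w_p i) (hφ_p : ∀ i, 0 < φ_p i) (hf_p : ∀ i, 0 < f_p i)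
    (hk_p : ∀ i, 0 < k_p i) (hh_p : ∀ i, 0 < h_p i) (hR_ap : ∀ i, 0 < R_ap i)
    (hEmax_p : ∀ i, 0 < Emax_p i)
    (hw_q : ∀ k, 0 < w_q k) (hφ_q : ∀ k, 0 < φ_q k) (hf_q : ∀ k, 0 < f_q k)
    (hk_q : ∀ k, 0 < k_q k) (hh_q : ∀ k, 0 < h_q k) (hp_q : ∀ k, 0 < p_q k)
    (hR_q : ∀ k, 0 < R_q k) (hEmax_q : ∀ k, 0 < Emax_q k)
    (hP : 0 < P) (hf_ap : 0 < f_ap) (hη : 0 < η ∧ η < 1) (hT : 0 < T) (hlth : 0 < l_th)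
    -- harvested-energy functions E_n^h(α₁) = min(η·P·h_n·α₁·T, E_n^max)
    (Eh_o : Fin m → ℝ → ℝ) (Eh_p : Fin m → ℝ → ℝ) (Eh_q : Fin K → ℝ → ℝ)
    (hEh_o : ∀ i α₁, Eh_o i α₁ = min (η * P * h_o i * α₁ * T) (Emax_o i))
    (hEh_p : ∀ i α₁, Eh_p i α₁ = min (η * P * h_p i * α₁ * T) (Emax_p i))
    (hEh_q : ∀ k α₁, Eh_q k α₁ = min (η * P * h_q k * α₁ * T) (Emax_q k))
    -- energy consumed by each device at a point of P4
    (Eused_o : P4Point m K → Fin m → ℝ) (Eused_p : P4Point m K → Fin m → ℝ)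
    (Eused_q : P4Point m K → Fin K → ℝ)
    (hEused_o : ∀ α₁ α₂ loLoc loAp loP lpLoc lqLoc lqAp i,
      Eused_o (α₁, α₂, loLoc, loAp, loP, lpLoc, lqLoc, lqAp) i =
        k_o i * f_o i ^ 2 * φ_o i * loLoc i + (p_o i / R_o i) * (loAp i + loP i))
    (hEused_p : ∀ α₁ α₂ loLoc loAp loP lpLoc lqLoc lqAp i,
      Eused_p (α₁, α₂, loLoc, loAp, loP, lpLoc, lqLoc, lqAp) i =
        k_p i * f_p i ^ 2 * (φ_p i * lpLoc i + φ_o i * loP i))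
    (hEused_q : ∀ α₁ α₂ loLoc loAp loP lpLoc lqLoc lqAp k,
      Eused_q (α₁, α₂, loLoc, loAp, loP, lpLoc, lqLoc, lqAp) k =
        k_q k * f_q k ^ 2 * φ_q k * lqLoc k + (p_q k / R_q k) * lqAp k)
    -- the feasible-set predicate of P4
    (Feasible : P4Point m K → Prop)
    (hFeas : ∀ α₁ α₂ loLoc loAp loP lpLoc lqLoc lqAp,
      Feasible (α₁, α₂, loLoc, loAp, loP, lpLoc, lqLoc, lqAp) ↔
        ((∀ i, (loAp i + loP i) / R_o i ≤ α₂ * T) ∧                                  -- (7d)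
         (∀ i, φ_o i * loP i / f_p i ≤ (1 - α₁ - α₂) * T - loP i / R_ap i) ∧          -- (7e)
         (∀ i, φ_p i * lpLoc i / f_p i ≤ T - φ_o i * loP i / f_p i) ∧                 -- (7f)
         (∀ k, lqAp k / R_q k ≤ α₂ * T) ∧                                             -- (7h)
         ((∑ i, φ_o i * loAp i + ∑ k, φ_q k * lqAp k) / f_ap ≤ (1 - α₁ - α₂) * T) ∧   -- (7i)
         (∀ i, loLoc i + loAp i + loP i ≥ l_th) ∧                                     -- (7o)
         (∀ i, lpLoc i ≥ l_th) ∧                                                      -- (7p)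
         (∀ k, lqLoc k + lqAp k ≥ l_th) ∧                                             -- (7q)
         ((∀ i, 0 ≤ loLoc i) ∧ (∀ i, 0 ≤ loAp i) ∧ (∀ i, 0 ≤ loP i) ∧                 -- (7r)
          (∀ i, 0 ≤ lpLoc i) ∧ (∀ k, 0 ≤ lqLoc k) ∧ (∀ k, 0 ≤ lqAp k)) ∧
         -- energy causality
         (∀ i, Eused_o (α₁, α₂, loLoc, loAp, loP, lpLoc, lqLoc, lqAp) i ≤ Eh_o i α₁) ∧
         (∀ i, Eused_p (α₁, α₂, loLoc, loAp, loP, lpLoc, lqLoc, lqAp) i ≤ Eh_p i α₁) ∧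
         (∀ k, Eused_q (α₁, α₂, loLoc, loAp, loP, lpLoc, lqLoc, lqAp) k ≤ Eh_q k α₁)))
    -- the objective of P4
    (W : P4Point m K → ℝ)
    (hW : ∀ α₁ α₂ loLoc loAp loP lpLoc lqLoc lqAp,
      W (α₁, α₂, loLoc, loAp, loP, lpLoc, lqLoc, lqAp) =
        ∑ i, (w_o i * (loLoc i + loAp i + loP i) + w_p i * lpLoc i)
          + ∑ k, w_q k * (lqLoc k + lqAp k))
    -- a feasible point satisfying the standing assumption k_n·f_n³·T > E_n^h(α₁)
    (x : P4Point m K) (hx : Feasible x)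
    (hstand_o : ∀ i, k_o i * f_o i ^ 3 * T > Eh_o i x.1)
    (hstand_p : ∀ i, k_p i * f_p i ^ 3 * T > Eh_p i x.1)
    (hstand_q : ∀ k, k_q k * f_q k ^ 3 * T > Eh_q k x.1) :
    -- (a) a slack energy constraint allows a strict improvement at the same (α₁, α₂)
    (((∃ i, Eused_o x i < Eh_o i x.1) ∨ (∃ i, Eused_p x i < Eh_p i x.1) ∨
        (∃ k, Eused_q x k < Eh_q k x.1)) →
      ∃ y : P4Point m K, Feasible y ∧ y.1 = x.1 ∧ y.2.1 = x.2.1 ∧ W x < W y) ∧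
    -- (b) hence at any maximizer every energy constraint is tight
    ((∀ y : P4Point m K, Feasible y → W y ≤ W x) →
      (∀ i, Eused_o x i = Eh_o i x.1) ∧ (∀ i, Eused_p x i = Eh_p i x.1) ∧
      (∀ k, Eused_q x k = Eh_q k x.1)) := by
  obtain ⟨α₁, α₂, lol, loa, lop, lpl, lql, lqa⟩ := x
  dsimp only at hstand_o hstand_p hstand_q ⊢
  simp only [hEused_o, hEused_p, hEused_q] at hstand_o hstand_p hstand_q ⊢
  rw [hFeas] at hx
  simp only [hEused_o, hEused_p, hEused_q] at hx
  obtain ⟨h7d, h7e, h7f, h7h, h7i, h7o, h7p, h7q,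
    ⟨hn1, hn2, hn3, hn4, hn5, hn6⟩, hEo, hEp, hEq⟩ := hx
  have hA : ((∃ i, k_o i * f_o i ^ 2 * φ_o i * lol i +
        (p_o i / R_o i) * (loa i + lop i) < Eh_o i α₁) ∨
      (∃ i, k_p i * f_p i ^ 2 * (φ_p i * lpl i + φ_o i * lop i) < Eh_p i α₁) ∨
      (∃ k, k_q k * f_q k ^ 2 * φ_q k * lql k +
        (p_q k / R_q k) * lqa k < Eh_q k α₁)) →
      ∃ y : P4Point m K, Feasible y ∧ y.1 = α₁ ∧ y.2.1 = α₂ ∧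
        W (α₁, α₂, lol, loa, lop, lpl, lql, lqa) < W y := by
    rintro (⟨i, hi⟩ | ⟨i, hi⟩ | ⟨k, hk⟩)
    · -- slack at SD i : increase lol i
      set c : ℝ := k_o i * f_o i ^ 2 * φ_o i with hc
      have hcpos : 0 < c := by have := hk_o i; have := hf_o i; have := hφ_o i; positivity
      set U : ℝ := k_o i * f_o i ^ 2 * φ_o i * lol i + (p_o i / R_o i) * (loa i + lop i) with hU
      set ε : ℝ := (Eh_o i α₁ - U) / c with hε
      have hεpos : 0 < ε := div_pos (by linarith) hcpos
      have hcε : c * ε = Eh_o i α₁ - U := mul_div_cancel₀ _ (ne_of_gt hcpos)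
      set lol' : Fin m → ℝ := Function.update lol i (lol i + ε) with hlol'
      have hmono : ∀ j, lol j ≤ lol' j := by
        intro j
        rcases eq_or_ne j i with rfl | hji
        · rw [hlol', Function.update_self]; linarith
        · rw [hlol', Function.update_of_ne hji]
      refine ⟨(α₁, α₂, lol', loa, lop, lpl, lql, lqa), ?_, rfl, rfl, ?_⟩
      · rw [hFeas]
        simp only [hEused_o, hEused_p, hEused_q]
        refine ⟨h7d, h7e, h7f, h7h, h7i, ?_, h7p, h7q,
          ⟨fun j => le_trans (hn1 j) (hmono j), hn2, hn3, hn4, hn5, hn6⟩, ?_, hEp, hEq⟩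
        · intro j
          have := h7o j
          have := hmono j
          linarith
        · intro j
          rcases eq_or_ne j i with rfl | hji
          · rw [hlol', Function.update_self]
            have : k_o j * f_o j ^ 2 * φ_o j * (lol j + ε) +
                (p_o j / R_o j) * (loa j + lop j) = U + c * ε := by
              rw [hU, hc]; ring
            rw [this, hcε]; linarith
          · rw [hlol', Function.update_of_ne hji]; exact hEo j
      · rw [hW, hW]
        have hsum : (∑ j, (w_o j * (lol' j + loa j + lop j) + w_p j * lpl j)) =
            (∑ j, (w_o j * (lol j + loa j + lop j) + w_p j * lpl j)) +
            ((w_o i * (lol' i + loa i + lop i) + w_p i * lpl i) -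
             (w_o i * (lol i + loa i + lop i) + w_p i * lpl i)) := by
          apply sum_update_diff'
          intro j hji
          rw [hlol', Function.update_of_ne hji]
        rw [hsum, hlol', Function.update_self]
        have : 0 < w_o i * ε := mul_pos (hw_o i) hεpos
        nlinarith [this]
    · -- slack at AD i : increase lpl i
      set d : ℝ := k_p i * f_p i ^ 2 with hd
      have hdpos : 0 < d := by have := hk_p i; have := hf_p i; positivity
      set c : ℝ := d * φ_p i with hc
      have hcpos : 0 < c := mul_pos hdpos (hφ_p i)
      set U : ℝ := k_p i * f_p i ^ 2 * (φ_p i * lpl i + φ_o i * lop i) with hU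
      set ε : ℝ := (Eh_p i α₁ - U) / c with hε
      have hεpos : 0 < ε := div_pos (by linarith) hcpos
      have hcε : c * ε = Eh_p i α₁ - U := mul_div_cancel₀ _ (ne_of_gt hcpos)
      set lpl' : Fin m → ℝ := Function.update lpl i (lpl i + ε) with hlpl'
      have hmono : ∀ j, lpl j ≤ lpl' j := by
        intro j
        rcases eq_or_ne j i with rfl | hji
        · rw [hlpl', Function.update_self]; linarith
        · rw [hlpl', Function.update_of_ne hji]
      have hEnew : d * (φ_p i * lpl' i + φ_o i * lop i) = Eh_p i α₁ := by
        rw [hlpl', Function.update_self]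
        have : d * (φ_p i * (lpl i + ε) + φ_o i * lop i) = U + c * ε := by
          rw [hU, hd, hc]; ring
        rw [this, hcε]; ring
      refine ⟨(α₁, α₂, lol, loa, lop, lpl', lql, lqa), ?_, rfl, rfl, ?_⟩
      · rw [hFeas]
        simp only [hEused_o, hEused_p, hEused_q]
        refine ⟨h7d, h7e, ?_, h7h, h7i, h7o, ?_, h7q,
          ⟨hn1, hn2, hn3, fun j => le_trans (hn4 j) (hmono j), hn5, hn6⟩, hEo, ?_, hEq⟩
        · -- (7f)
          intro j
          rcases eq_or_ne j i with rfl | hji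
          · have hlt : d * (φ_p j * lpl' j + φ_o j * lop j) < d * (f_p j * T) := by
              rw [hEnew]
              have := hstand_p j
              have : k_p j * f_p j ^ 3 * T = d * (f_p j * T) := by rw [hd]; ring
              linarith [hstand_p j, this]
            have hlt2 : φ_p j * lpl' j + φ_o j * lop j < f_p j * T :=
              lt_of_mul_lt_mul_left (by linarith) (le_of_lt hdpos)
            rw [le_sub_iff_add_le, ← add_div, div_le_iff₀ (hf_p j)]
            linarith
          · simp only [hlpl', Function.update_of_ne hji]
            exact h7f j
        · intro j
          have := h7p j
          have := hmono j
          linarith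
        · intro j
          rcases eq_or_ne j i with rfl | hji
          · rw [show k_p j * f_p j ^ 2 * (φ_p j * lpl' j + φ_o j * lop j) =
                d * (φ_p j * lpl' j + φ_o j * lop j) from by rw [hd], hEnew]
          · rw [hlpl', Function.update_of_ne hji]; exact hEp j
      · rw [hW, hW]
        have hsum : (∑ j, (w_o j * (lol j + loa j + lop j) + w_p j * lpl' j)) =
            (∑ j, (w_o j * (lol j + loa j + lop j) + w_p j * lpl j)) +
            ((w_o i * (lol i + loa i + lop i) + w_p i * lpl' i) -
             (w_o i * (lol i + loa i + lop i) + w_p i * lpl i)) := by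
          apply sum_update_diff'
          intro j hji
          rw [hlpl', Function.update_of_ne hji]
        rw [hsum, hlpl', Function.update_self]
        have : 0 < w_p i * ε := mul_pos (hw_p i) hεpos
        nlinarith [this]
    · -- slack at ID k : increase lql k
      set c : ℝ := k_q k * f_q k ^ 2 * φ_q k with hc
      have hcpos : 0 < c := by have := hk_q k; have := hf_q k; have := hφ_q k; positivity
      set U : ℝ := k_q k * f_q k ^ 2 * φ_q k * lql k + (p_q k / R_q k) * lqa k with hU
      set ε : ℝ := (Eh_q k α₁ - U) / c with hε
      have hεpos : 0 < ε := div_pos (by linarith) hcpos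
      have hcε : c * ε = Eh_q k α₁ - U := mul_div_cancel₀ _ (ne_of_gt hcpos)
      set lql' : Fin K → ℝ := Function.update lql k (lql k + ε) with hlql'
      have hmono : ∀ j, lql j ≤ lql' j := by
        intro j
        rcases eq_or_ne j k with rfl | hjk
        · rw [hlql', Function.update_self]; linarith
        · rw [hlql', Function.update_of_ne hjk]
      refine ⟨(α₁, α₂, lol, loa, lop, lpl, lql', lqa), ?_, rfl, rfl, ?_⟩
      · rw [hFeas]
        simp only [hEused_o, hEused_p, hEused_q]
        refine ⟨h7d, h7e, h7f, h7h, h7i, h7o, h7p, ?_,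
          ⟨hn1, hn2, hn3, hn4, fun j => le_trans (hn5 j) (hmono j), hn6⟩, hEo, hEp, ?_⟩
        · intro j
          have := h7q j
          have := hmono j
          linarith
        · intro j
          rcases eq_or_ne j k with rfl | hjk
          · rw [hlql', Function.update_self]
            have : k_q j * f_q j ^ 2 * φ_q j * (lql j + ε) +
                (p_q j / R_q j) * lqa j = U + c * ε := by
              rw [hU, hc]; ring
            rw [this, hcε]; linarith
          · rw [hlql', Function.update_of_ne hjk]; exact hEq j
      · rw [hW, hW]
        have hsum : (∑ j, w_q j * (lql' j + lqa j)) =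
            (∑ j, w_q j * (lql j + lqa j)) +
            (w_q k * (lql' k + lqa k) - w_q k * (lql k + lqa k)) := by
          apply sum_update_diff'
          intro j hjk
          rw [hlql', Function.update_of_ne hjk]
        rw [hsum, hlql', Function.update_self]
        have : 0 < w_q k * ε := mul_pos (hw_q k) hεpos
        nlinarith [this]
  refine ⟨hA, ?_⟩
  intro hmax
  have hno : ¬ ((∃ i, k_o i * f_o i ^ 2 * φ_o i * lol i +
        (p_o i / R_o i) * (loa i + lop i) < Eh_o i α₁) ∨
      (∃ i, k_p i * f_p i ^ 2 * (φ_p i * lpl i + φ_o i * lop i) < Eh_p i α₁) ∨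
      (∃ k, k_q k * f_q k ^ 2 * φ_q k * lql k +
        (p_q k / R_q k) * lqa k < Eh_q k α₁)) := by
    intro h
    obtain ⟨y, hyF, -, -, hlt⟩ := hA h
    exact absurd (hmax y hyF) (not_le.mpr hlt)
  push_neg at hno
  obtain ⟨ho, hp, hq⟩ := hno
  exact ⟨fun i => le_antisymm (hEo i) (ho i),
    fun i => le_antisymm (hEp i) (hp i),
    fun j => le_antisymm (hEq j) (hq j)⟩
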